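/- Let x, y, α, β, γ ∈ ℝ and n ∈ ℕ. For the Hénon-type exponent E(a, b) = x·(b + γ·a − α·a²) + y·β·a, the mixed iterated partial derivative of order n in a and order n in b of (a, b) ↦ exp(E(a, b)), evaluated at (a, b) = (0, 0), equals x^n times the n-th iterated derivative at 0 of the one-variable function a ↦ exp((x·γ + y·β)·a − x·α·a²). That is, (d^n/db^n)|_{b=0} (d^n/da^n)|_{a=0} exp(x·(b + γ·a − α·a²) + y·β·a) = x^n · (d^n/da^n)|_{a=0} exp((x·γ + y·β)·a − x·α·a²). -/

import Mathlib

private lemma iterDeriv_const_mul_aux (n : ℕ) (c : ℝ) {f : ℝ → ℝ}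
    (hf : ContDiff ℝ n f) (t : ℝ) :
    iteratedDeriv n (fun s => c * f s) t = c * iteratedDeriv n f t := by
  have : (fun s => c * f s) = c • f := by funext s; simp [smul_eq_mul]
  rw [this, iteratedDeriv, iteratedFDeriv_const_smul_apply hf.contDiffAt]
  simp [iteratedDeriv]

/-- Factorization of the Hénon mixed derivative: the mixed `n`-th iterated partial
derivatives in `a` and `b` of `exp(x(b + γa − αa²) + yβa)` at `(0,0)` equal
`xⁿ` times the `n`-th derivative at `0` of `a ↦ exp((xγ + yβ)a − xαa²)`. -/
theorem henon_mixed_deriv_factorization (x y α β γ : ℝ) (n : ℕ) :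
    iteratedDeriv n
        (fun b => iteratedDeriv n
          (fun a => Real.exp (x * (b + γ * a - α * a ^ 2) + y * β * a)) 0) 0 =
      x ^ n *
        iteratedDeriv n (fun a => Real.exp ((x * γ + y * β) * a - x * α * a ^ 2)) 0 := by
  set C := iteratedDeriv n (fun a => Real.exp ((x * γ + y * β) * a - x * α * a ^ 2)) 0 with hC
  have hg : ContDiff ℝ n (fun a : ℝ => Real.exp ((x * γ + y * β) * a - x * α * a ^ 2)) := by
    apply Real.contDiff_exp.comp
    fun_prop
  have h2 : ∀ b : ℝ,
      iteratedDeriv n (fun a => Real.exp (x * (b + γ * a - α * a ^ 2) + y * β * a)) 0 =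
        Real.exp (x * b) * C := by
    intro b
    have h1 : (fun a => Real.exp (x * (b + γ * a - α * a ^ 2) + y * β * a)) =
        fun a => Real.exp (x * b) * Real.exp ((x * γ + y * β) * a - x * α * a ^ 2) := by
      funext a
      rw [← Real.exp_add]
      ring_nf
    rw [h1, iterDeriv_const_mul_aux n _ hg, hC]
  have h3 : (fun b => iteratedDeriv n
      (fun a => Real.exp (x * (b + γ * a - α * a ^ 2) + y * β * a)) 0) =
      fun b => C * Real.exp (x * b) := by
    funext b; rw [h2 b, mul_comm]
  rw [h3, iterDeriv_const_mul_aux n C (by apply Real.contDiff_exp.comp; fun_prop) 0]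
  rw [show (fun b : ℝ => Real.exp (x * b)) = fun b => Real.exp (x * b) from rfl,
    iteratedDeriv_exp_const_mul]
  simp [mul_comm, mul_assoc, mul_left_comm]
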